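/- Let d be an even natural number and h_0,…,h_d real numbers with h_k = h_{d−k} for all 0 ≤ k ≤ d, and let (γ_0,…,γ_{d/2}) be its gamma vector. Then the following identity of polynomials in ℝ[u] holds: h_{d/2} + 2·Σ_{j=1}^{d/2} h_{d/2−j}·T_j(u/2) = Σ_{i=0}^{d/2} γ_i·(u+2)^{d/2−i}. (Equivalently, the polynomial g(u) := h_{d/2} + 2Σ_{j=1}^{d/2} h_{d/2−j} T_j(u/2) satisfies (u+2)^{d/2}·γ(1/(u+2)) = g(u), an 'inverted Chebyshev basis expansion' of the gamma polynomial.) -/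

import Mathlib

open Polynomial Finset

/-- **Gamma vectors and inverted Chebyshev expansions.**
Let `d` be even and `h 0, …, h d` a palindromic (reciprocal) sequence of reals, with gamma
vector `γ 0, …, γ (d/2)` defined by `∑ h k t^k = ∑ γ i t^i (1+t)^(d-2i)`.  Then
`h (d/2) + 2 ∑_{j=1}^{d/2} h (d/2 - j) · T_j(u/2) = ∑_{i=0}^{d/2} γ i · (u+2)^(d/2-i)`
as polynomials in `u`, where `T_j` is the `j`-th Chebyshev polynomial of the first kind. -/
lemma eval_T_inv (z : ℝ) (hz : z ≠ 0) (j : ℕ) :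
    Polynomial.eval ((z + z⁻¹)/2) (Polynomial.Chebyshev.T ℝ (j : ℤ))
      = (z ^ j + z⁻¹ ^ j) / 2 := by
  induction j using Nat.twoStepInduction with
  | zero => simp [Polynomial.Chebyshev.T_zero]
  | one => simp [Polynomial.Chebyshev.T_one]
  | more n ih1 ih2 =>
    rw [show ((n + 2 : ℕ) : ℤ) = (n : ℤ) + 2 by push_cast; ring,
      Polynomial.Chebyshev.T_add_two]
    simp only [eval_sub, eval_mul, eval_ofNat, eval_X]
    rw [show ((n : ℤ) + 1) = ((n + 1 : ℕ) : ℤ) by push_cast; ring, ih2, ih1]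
    field_simp
    ring_nf
    field_simp
    ring

-- reindexing lemma
lemma sum_palindrome (m : ℕ) (h : ℕ → ℝ) (hsym : ∀ k ≤ m + m, h k = h (m + m - k))
    (z : ℝ) (hz : z ≠ 0) :
    z ^ m * (h m + ∑ j ∈ Finset.Icc 1 m, h (m - j) * (z ^ j + z⁻¹ ^ j))
      = ∑ k ∈ Finset.range (m + m + 1), h k * z ^ k := by
  -- LHS = h m * z^m + ∑_{j=1}^m (h(m-j) z^{m-j} + h(m+j) z^{m+j})
  have lhs_eq : z ^ m * (h m + ∑ j ∈ Finset.Icc 1 m, h (m - j) * (z ^ j + z⁻¹ ^ j))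
      = h m * z ^ m + ∑ j ∈ Finset.Icc 1 m, (h (m - j) * z ^ (m - j) + h (m + j) * z ^ (m + j)) := by
    rw [mul_add, Finset.mul_sum]
    congr 1
    · ring
    apply Finset.sum_congr rfl
    intro j hj
    obtain ⟨hj1, hj2⟩ := Finset.mem_Icc.mp hj
    have e1 : z ^ m * z⁻¹ ^ j = z ^ (m - j) := by
      rw [show m = (m - j) + j by omega, pow_add, inv_pow]
      field_simp
      rw [Nat.add_sub_cancel]
    have e2 : z ^ m * z ^ j = z ^ (m + j) := by rw [← pow_add]
    have e3 : h (m + j) = h (m - j) := by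
      rw [hsym (m + j) (by omega)]
      congr 1
      omega
    rw [e3]
    calc z ^ m * (h (m - j) * (z ^ j + z⁻¹ ^ j))
        = h (m - j) * (z ^ m * z⁻¹ ^ j) + h (m - j) * (z ^ m * z ^ j) := by ring
      _ = _ := by rw [e1, e2]
  rw [lhs_eq]
  -- RHS split
  have rsplit : ∑ k ∈ Finset.range (m + m + 1), h k * z ^ k
      = (∑ k ∈ Finset.range (m + 1), h k * z ^ k)
        + ∑ i ∈ Finset.range m, h (m + 1 + i) * z ^ (m + 1 + i) := by
    rw [Finset.range_eq_Ico, ← Finset.sum_Ico_consecutive _ (Nat.zero_le (m + 1)) (by omega)]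
    congr 1
    · rw [Finset.range_eq_Ico]
    · rw [Finset.sum_Ico_eq_sum_range, show m + m + 1 - (m + 1) = m by omega]
  rw [rsplit, Finset.sum_range_succ]
  -- now convert Icc sum
  have icc_eq : ∑ j ∈ Finset.Icc 1 m, (h (m - j) * z ^ (m - j) + h (m + j) * z ^ (m + j))
      = (∑ k ∈ Finset.range m, h k * z ^ k)
        + ∑ i ∈ Finset.range m, h (m + 1 + i) * z ^ (m + 1 + i) := by
    rw [show Finset.Icc 1 m = Finset.Ico 1 (m + 1) by rw [Finset.Ico_add_one_right_eq_Icc],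
      Finset.sum_Ico_eq_sum_range]
    simp only [show m + 1 - 1 = m from rfl]
    rw [Finset.sum_add_distrib]
    congr 1
    · rw [← Finset.sum_range_reflect (fun k => h k * z ^ k) m]
      apply Finset.sum_congr rfl
      intro i hi
      congr 2 <;> omega
    · apply Finset.sum_congr rfl
      intro i hi
      congr 2 <;> omega
  rw [icc_eq]
  ring

lemma eval_T_comp (z : ℝ) (hz : z ≠ 0) (j : ℕ) :
    Polynomial.eval (z + z⁻¹) ((Polynomial.Chebyshev.T ℝ (j : ℤ)).comp (C (1 / 2 : ℝ) * X))
      = (z ^ j + z⁻¹ ^ j) / 2 := by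
  rw [eval_comp, eval_mul, eval_C, eval_X,
    show (1 / 2 : ℝ) * (z + z⁻¹) = (z + z⁻¹) / 2 by ring, eval_T_inv z hz]

theorem gamma_inverted_chebyshev_expansion
    (d : ℕ) (hd : Even d) (h γ : ℕ → ℝ)
    (hsym : ∀ k ≤ d, h k = h (d - k))
    (hgamma : ∑ k ∈ Finset.range (d + 1), C (h k) * X ^ k
      = ∑ i ∈ Finset.range (d / 2 + 1), C (γ i) * X ^ i * (1 + X) ^ (d - 2 * i)) :
    C (h (d / 2)) +
        2 * ∑ j ∈ Finset.Icc 1 (d / 2),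
          C (h (d / 2 - j)) * (Polynomial.Chebyshev.T ℝ (j : ℤ)).comp (C (1 / 2 : ℝ) * X)
      = ∑ i ∈ Finset.range (d / 2 + 1), C (γ i) * (X + 2) ^ (d / 2 - i) := by

  obtain ⟨m, rfl⟩ := hd
  have hm2 : (m + m) / 2 = m := by omega
  rw [hm2] at hgamma ⊢
  apply Polynomial.eq_of_infinite_eval_eq
  apply Set.Infinite.mono _ (Set.Ioi_infinite (2 : ℝ))
  intro u hu
  simp only [Set.mem_Ioi] at hu
  simp only [Set.mem_setOf_eq]
  -- produce z with u = z + z⁻¹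
  obtain ⟨z, hz0, huz⟩ : ∃ z : ℝ, 0 < z ∧ u = z + z⁻¹ := by
    have hs0 : 0 ≤ Real.sqrt (u ^ 2 - 4) := Real.sqrt_nonneg _
    have hs2 : Real.sqrt (u ^ 2 - 4) ^ 2 = u ^ 2 - 4 := Real.sq_sqrt (by nlinarith)
    refine ⟨(u + Real.sqrt (u ^ 2 - 4)) / 2, by nlinarith, ?_⟩
    have hmul : ((u + Real.sqrt (u ^ 2 - 4)) / 2)
        * (u - (u + Real.sqrt (u ^ 2 - 4)) / 2) = 1 := by
      linear_combination (-(1 : ℝ) / 4) * hs2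
    have hinv := eq_inv_of_mul_eq_one_right hmul
    linarith [hinv]
  have hzne : z ≠ 0 := ne_of_gt hz0
  rw [huz]
  simp only [eval_add, eval_mul, eval_C, Polynomial.eval_finset_sum, eval_T_comp z hzne,
    eval_pow, eval_X, eval_ofNat]
  apply mul_left_cancel₀ (pow_ne_zero m hzne)
  have heval := congrArg (Polynomial.eval z) hgamma
  simp only [Polynomial.eval_finset_sum, eval_mul, eval_pow, eval_add, eval_one, eval_C,
    eval_X] at heval
  have l1 : (2 : ℝ) * ∑ j ∈ Finset.Icc 1 m, h (m - j) * ((z ^ j + z⁻¹ ^ j) / 2)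
      = ∑ j ∈ Finset.Icc 1 m, h (m - j) * (z ^ j + z⁻¹ ^ j) := by
    rw [Finset.mul_sum]
    apply Finset.sum_congr rfl
    intro j _
    ring
  rw [l1, sum_palindrome m h hsym z hzne, heval, Finset.mul_sum]
  apply Finset.sum_congr rfl
  intro i hi
  have him : i ≤ m := Nat.lt_succ_iff.mp (Finset.mem_range.mp hi)
  have e : z + z⁻¹ + 2 = (1 + z) ^ 2 / z := by field_simp; ring
  rw [e, div_pow, ← pow_mul, show 2 * (m - i) = m + m - 2 * i by omega,
    show z ^ m = z ^ i * z ^ (m - i) by rw [← pow_add]; congr 1; omega]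
  field_simp
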